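/- Assume there is ρ ≥ 0 such that for every g ∈ L the solution (u_g,p_g) of the penalized saddle-point problem with datum v ↦ ⟨g, i v⟩_L satisfies inf{ N(u_g − v_h, p_g − q_h) : (v_h,q_h) ∈ H_h × Q_h } ≤ ρ ‖g‖_L. Define the discrete solution operator T_h : L → L by T_h f := i u_{f,h}, where (u_{f,h}, p_{f,h}) is the solution of the discrete problem with datum v ↦ ⟨f, i v⟩_L. Then for every f ∈ L, ‖T f − T_h f‖_L ≤ C ρ² ‖f‖_L, where C > 0 depends only on α, β, β̃ and the boundedness constants of a, b and c. -/

import Mathlib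

open scoped RealInnerProductSpace

section helpers

variable {H Q : Type*} [NormedAddCommGroup H] [InnerProductSpace ℝ H]
  [NormedAddCommGroup Q] [InnerProductSpace ℝ Q]

private noncomputable def NN (a : H →L[ℝ] H →L[ℝ] ℝ) (c : Q →L[ℝ] Q →L[ℝ] ℝ)
    (x : H) (y : Q) : ℝ :=
  Real.sqrt (a x x + ‖y‖ ^ 2 + c y y)

private lemma NN_def (a : H →L[ℝ] H →L[ℝ] ℝ) (c : Q →L[ℝ] Q →L[ℝ] ℝ) (x : H) (y : Q) :
    NN a c x y = Real.sqrt (a x x + ‖y‖ ^ 2 + c y y) := rfl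

private lemma NN_nonneg (a : H →L[ℝ] H →L[ℝ] ℝ) (c : Q →L[ℝ] Q →L[ℝ] ℝ) (x : H) (y : Q) :
    0 ≤ NN a c x y := Real.sqrt_nonneg _

private lemma NN_neg_right (a : H →L[ℝ] H →L[ℝ] ℝ) (c : Q →L[ℝ] Q →L[ℝ] ℝ) (x : H) (y : Q) :
    NN a c x (-y) = NN a c x y := by
  unfold NN
  simp [map_neg, ContinuousLinearMap.neg_apply, norm_neg]

private lemma NN_sq {a : H →L[ℝ] H →L[ℝ] ℝ} {c : Q →L[ℝ] Q →L[ℝ] ℝ}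
    (haa : ∀ x : H, 0 ≤ a x x) (hc : ∀ y : Q, 0 ≤ c y y) (x : H) (y : Q) :
    NN a c x y ^ 2 = a x x + ‖y‖ ^ 2 + c y y :=
  Real.sq_sqrt (by have := haa x; have := hc y; positivity)

private lemma sqrt_a_le_NN {a : H →L[ℝ] H →L[ℝ] ℝ} {c : Q →L[ℝ] Q →L[ℝ] ℝ}
    (haa : ∀ x : H, 0 ≤ a x x) (hc : ∀ y : Q, 0 ≤ c y y) (x : H) (y : Q) :
    Real.sqrt (a x x) ≤ NN a c x y :=
  Real.sqrt_le_sqrt (by have := hc y; have := sq_nonneg ‖y‖; linarith)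

private lemma norm_le_NN {a : H →L[ℝ] H →L[ℝ] ℝ} {c : Q →L[ℝ] Q →L[ℝ] ℝ}
    (haa : ∀ x : H, 0 ≤ a x x) (hc : ∀ y : Q, 0 ≤ c y y) (x : H) (y : Q) :
    ‖y‖ ≤ NN a c x y := by
  rw [show ‖y‖ = Real.sqrt (‖y‖ ^ 2) from (Real.sqrt_sq (norm_nonneg y)).symm]
  exact Real.sqrt_le_sqrt (by have := hc y; have := haa x; linarith)

private lemma sqrt_c_le_NN {a : H →L[ℝ] H →L[ℝ] ℝ} {c : Q →L[ℝ] Q →L[ℝ] ℝ}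
    (haa : ∀ x : H, 0 ≤ a x x) (hc : ∀ y : Q, 0 ≤ c y y) (x : H) (y : Q) :
    Real.sqrt (c y y) ≤ NN a c x y :=
  Real.sqrt_le_sqrt (by have := haa x; have := sq_nonneg ‖y‖; linarith)

private lemma bilin_cs_sq' (B : H →L[ℝ] H →L[ℝ] ℝ) (hsymm : ∀ u v : H, B u v = B v u)
    (hpos : ∀ u : H, 0 ≤ B u u) (u v : H) :
    (B u v) ^ 2 ≤ B u u * B v v := by
  have hd : discrim (B v v) (2 * B u v) (B u u) ≤ 0 := by
    apply discrim_le_zero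
    intro t
    have h := hpos (u + t • v)
    have e : B (u + t • v) (u + t • v) = B v v * (t * t) + 2 * B u v * t + B u u := by
      simp only [map_add, map_smul, ContinuousLinearMap.add_apply,
        ContinuousLinearMap.smul_apply, smul_eq_mul]
      rw [hsymm v u]; ring
    rw [e] at h; exact h
  rw [discrim] at hd
  nlinarith

private lemma bilin_cs_abs' (B : H →L[ℝ] H →L[ℝ] ℝ) (hsymm : ∀ u v : H, B u v = B v u)
    (hpos : ∀ u : H, 0 ≤ B u u) (u v : H) :
    |B u v| ≤ Real.sqrt (B u u) * Real.sqrt (B v v) := by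
  calc |B u v| = Real.sqrt ((B u v) ^ 2) := by rw [Real.sqrt_sq_eq_abs]
    _ ≤ Real.sqrt (B u u * B v v) := Real.sqrt_le_sqrt (bilin_cs_sq' B hsymm hpos u v)
    _ = _ := Real.sqrt_mul (hpos u) _

private lemma Abil_le (a : H →L[ℝ] H →L[ℝ] ℝ) (b : H →L[ℝ] Q →L[ℝ] ℝ)
    (c : Q →L[ℝ] Q →L[ℝ] ℝ)
    (ha_symm : ∀ u v : H, a u v = a v u)
    {α : ℝ} (hα : 0 < α) (ha_coer : ∀ u : H, α * ‖u‖ ^ 2 ≤ a u u)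
    (hc_symm : ∀ p q : Q, c p q = c q p) (hc_pos : ∀ p : Q, 0 ≤ c p p)
    (X : H) (Y : Q) (V : H) (W : Q) :
    |a X V + b V Y + b X W - c Y W| ≤
      (2 + 2 * (‖b‖ + 1) / Real.sqrt α) * (NN a c X Y * NN a c V W) := by
  have haa : ∀ x : H, 0 ≤ a x x := fun x => le_trans (by positivity) (ha_coer x)
  have hsα : 0 < Real.sqrt α := Real.sqrt_pos.mpr hα
  have hnorm : ∀ v : H, ‖v‖ ≤ Real.sqrt (a v v) / Real.sqrt α := by
    intro v
    rw [show ‖v‖ = Real.sqrt (‖v‖ ^ 2) from (Real.sqrt_sq (norm_nonneg v)).symm,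
      ← Real.sqrt_div (haa v) α]
    exact Real.sqrt_le_sqrt ((le_div_iff₀ hα).mpr (by linarith [ha_coer v]))
  set NX := NN a c X Y with hNX
  set NV := NN a c V W with hNV
  have hNX0 : 0 ≤ NX := NN_nonneg a c X Y
  have hNV0 : 0 ≤ NV := NN_nonneg a c V W
  have t1 : |a X V| ≤ NX * NV :=
    (bilin_cs_abs' a ha_symm haa X V).trans
      (mul_le_mul (sqrt_a_le_NN haa hc_pos X Y) (sqrt_a_le_NN haa hc_pos V W)
        (Real.sqrt_nonneg _) hNX0)
  have t4 : |c Y W| ≤ NX * NV :=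
    (bilin_cs_abs' c hc_symm hc_pos Y W).trans
      (mul_le_mul (sqrt_c_le_NN haa hc_pos X Y) (sqrt_c_le_NN haa hc_pos V W)
        (Real.sqrt_nonneg _) hNX0)
  have hVle : ‖V‖ ≤ NV / Real.sqrt α :=
    (hnorm V).trans (by gcongr; exact sqrt_a_le_NN haa hc_pos V W)
  have hXle : ‖X‖ ≤ NX / Real.sqrt α :=
    (hnorm X).trans (by gcongr; exact sqrt_a_le_NN haa hc_pos X Y)
  have hYle : ‖Y‖ ≤ NX := norm_le_NN haa hc_pos X Y
  have hWle : ‖W‖ ≤ NV := norm_le_NN haa hc_pos V W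
  have t2 : |b V Y| ≤ ((‖b‖ + 1) / Real.sqrt α) * (NX * NV) := by
    have h1 : |b V Y| ≤ ‖b‖ * ‖V‖ * ‖Y‖ := by
      simpa [Real.norm_eq_abs] using b.le_opNorm₂ V Y
    calc |b V Y| ≤ ‖b‖ * ‖V‖ * ‖Y‖ := h1
      _ ≤ (‖b‖ + 1) * (NV / Real.sqrt α) * NX := by
          exact mul_le_mul (mul_le_mul (by linarith) hVle (norm_nonneg V)
            (by positivity)) hYle (norm_nonneg Y) (by positivity)
      _ = ((‖b‖ + 1) / Real.sqrt α) * (NX * NV) := by ring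
  have t3 : |b X W| ≤ ((‖b‖ + 1) / Real.sqrt α) * (NX * NV) := by
    have h1 : |b X W| ≤ ‖b‖ * ‖X‖ * ‖W‖ := by
      simpa [Real.norm_eq_abs] using b.le_opNorm₂ X W
    calc |b X W| ≤ ‖b‖ * ‖X‖ * ‖W‖ := h1
      _ ≤ (‖b‖ + 1) * (NX / Real.sqrt α) * NV := by
          exact mul_le_mul (mul_le_mul (by linarith) hXle (norm_nonneg X)
            (by positivity)) hWle (norm_nonneg W) (by positivity)
      _ = ((‖b‖ + 1) / Real.sqrt α) * (NX * NV) := by ring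
  have habs : |a X V + b V Y + b X W - c Y W| ≤ |a X V| + |b V Y| + |b X W| + |c Y W| := by
    have h := abs_add_le (a X V + b V Y + b X W) (-(c Y W))
    have h' := abs_add_le (a X V + b V Y) (b X W)
    have h'' := abs_add_le (a X V) (b V Y)
    rw [abs_neg] at h
    rw [sub_eq_add_neg]
    linarith
  have hsum : |a X V| + |b V Y| + |b X W| + |c Y W| ≤
      NX * NV + (‖b‖ + 1) / Real.sqrt α * (NX * NV) +
        (‖b‖ + 1) / Real.sqrt α * (NX * NV) + NX * NV := by linarith
  exact habs.trans (hsum.trans (le_of_eq (by ring)))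

private lemma neg_half_le {x P Q : ℝ} (h : x ^ 2 ≤ P * Q) (hP : 0 ≤ P) (hQ : 0 ≤ Q) :
    -(P / 2 + Q / 2) ≤ x := by
  nlinarith [sq_nonneg (x + P / 2 + Q / 2), sq_nonneg (P / 2 - Q / 2), sq_nonneg (P - Q)]

private lemma half_le_of_sq_le {x P Q : ℝ} (h : x ^ 2 ≤ P * Q) (hP : 0 ≤ P) (hQ : 0 ≤ Q) :
    x ≤ P / 2 + Q / 2 := by
  have h' : (-x) ^ 2 ≤ P * Q := by nlinarith
  have := neg_half_le h' hP hQ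
  linarith

end helpers

set_option maxHeartbeats 1000000

/-- if the best-approximation error of the continuous solutions by the
discrete spaces is bounded by `ρ ‖g‖` for every datum `g`, then the solution operators
satisfy the double-order bound `‖T f − T_h f‖ ≤ C ρ² ‖f‖`, with `C` depending only on
`α`, `β`, `β̃` and the boundedness constants of `a`, `b`, `c`. -/
theorem solution_operator_double_order_convergence
    {H Q L : Type*}
    [NormedAddCommGroup H] [InnerProductSpace ℝ H] [CompleteSpace H]
    [NormedAddCommGroup Q] [InnerProductSpace ℝ Q] [CompleteSpace Q]
    [NormedAddCommGroup L] [InnerProductSpace ℝ L] [CompleteSpace L]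
    (a : H →L[ℝ] H →L[ℝ] ℝ) (b : H →L[ℝ] Q →L[ℝ] ℝ) (c : Q →L[ℝ] Q →L[ℝ] ℝ)
    (ha_symm : ∀ u v : H, a u v = a v u)
    (α : ℝ) (hα : 0 < α) (ha_coer : ∀ u : H, α * ‖u‖ ^ 2 ≤ a u u)
    (β : ℝ) (hβ : 0 < β)
    (hb_infsup : ∀ q : Q, ∃ v : H, v ≠ 0 ∧ β * ‖v‖ * ‖q‖ ≤ b v q)
    (hc_symm : ∀ p q : Q, c p q = c q p) (hc_pos : ∀ p : Q, 0 ≤ c p p)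
    (i : H →L[ℝ] L)
    (Hh : Submodule ℝ H) (Qh : Submodule ℝ Q)
    (hHh_closed : IsClosed (Hh : Set H)) (hQh_closed : IsClosed (Qh : Set Q))
    (β' : ℝ) (hβ' : 0 < β')
    (hb_infsup_h : ∀ qh ∈ Qh, ∃ vh ∈ Hh, vh ≠ 0 ∧ β' * ‖vh‖ * ‖qh‖ ≤ b vh qh) :
    ∃ C > (0 : ℝ), ∀ ρ : ℝ, 0 ≤ ρ →
      ∀ (u_ : L → H) (p_ : L → Q) (uh_ : L → H) (ph_ : L → Q),
        (∀ g : L,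
          (∀ v : H, a (u_ g) v + b v (p_ g) = ⟪g, i v⟫) ∧
          (∀ q : Q, b (u_ g) q - c (p_ g) q = 0)) →
        (∀ f : L, uh_ f ∈ Hh ∧ ph_ f ∈ Qh ∧
          (∀ vh ∈ Hh, a (uh_ f) vh + b vh (ph_ f) = ⟪f, i vh⟫) ∧
          (∀ qh ∈ Qh, b (uh_ f) qh - c (ph_ f) qh = 0)) →
        (∀ g : L,
          (⨅ (vh : Hh) (qh : Qh),
            Real.sqrt (a (u_ g - ↑vh) (u_ g - ↑vh) + ‖p_ g - ↑qh‖ ^ 2 +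
              c (p_ g - ↑qh) (p_ g - ↑qh))) ≤ ρ * ‖g‖) →
        ∀ f : L, ‖i (u_ f) - i (uh_ f)‖ ≤ C * ρ ^ 2 * ‖f‖ := by
  have haa : ∀ x : H, 0 ≤ a x x := fun x => le_trans (by positivity) (ha_coer x)
  set Ca : ℝ := ‖a‖ + 1 with hCadef
  have hCa0 : 0 < Ca := by rw [hCadef]; positivity
  set sα : ℝ := Real.sqrt α with hsadef
  have hsα : 0 < sα := Real.sqrt_pos.mpr hα
  set CA : ℝ := 2 + 2 * (‖b‖ + 1) / sα with hCAdef
  have hCAeq : CA = 2 + 2 * (‖b‖ + 1) / Real.sqrt α := by rw [hCAdef, hsadef]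
  have hCA0 : 0 < CA := by
    rw [hCAeq]
    positivity
  set δ : ℝ := β' / Ca with hδdef
  have hδ0 : 0 < δ := div_pos hβ' hCa0
  set qq : ℝ := β' ^ 2 / (2 * Ca) with hqqdef
  have hqq0 : 0 < qq := by rw [hqqdef]; positivity
  set γ : ℝ := min (1 / 2 : ℝ) qq with hγdef
  have hγ0 : 0 < γ := lt_min (by norm_num) hqq0
  set C2sq : ℝ := 2 + 2 * δ ^ 2 * Ca with hC2sqdef
  have hC2sq0 : 0 < C2sq := by
    rw [hC2sqdef]
    linarith [mul_nonneg (sq_nonneg δ) hCa0.le]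
  set C2 : ℝ := Real.sqrt C2sq with hC2def
  have hC20 : 0 < C2 := Real.sqrt_pos.mpr hC2sq0
  set K : ℝ := CA * C2 / γ with hKdef
  have hK0 : 0 < K := div_pos (mul_pos hCA0 hC20) hγ0
  refine ⟨CA * (1 + K), mul_pos hCA0 (by linarith), ?_⟩
  intro ρ hρ u_ p_ uh_ ph_ hcont hdisc happrox f
  have happ : ∀ g : L, ∀ ε : ℝ, 0 < ε → ∃ vh ∈ Hh, ∃ qh ∈ Qh,
      NN a c (u_ g - vh) (p_ g - qh) < ρ * ‖g‖ + ε := by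
    intro g ε hε
    haveI : Nonempty Hh := ⟨0⟩
    haveI : Nonempty Qh := ⟨0⟩
    have hlt : (⨅ (vh : Hh) (qh : Qh),
        Real.sqrt (a (u_ g - ↑vh) (u_ g - ↑vh) + ‖p_ g - ↑qh‖ ^ 2 +
          c (p_ g - ↑qh) (p_ g - ↑qh))) < ρ * ‖g‖ + ε :=
      lt_of_le_of_lt (happrox g) (by linarith)
    obtain ⟨vh, hvh⟩ := exists_lt_of_ciInf_lt hlt
    obtain ⟨qh, hqh⟩ := exists_lt_of_ciInf_lt hvh
    refine ⟨vh, vh.2, qh, qh.2, ?_⟩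
    rw [NN_def]
    exact hqh
  obtain ⟨huh_mem, hph_mem, hdisc1, hdisc2⟩ := hdisc f
  set E : H := u_ f - uh_ f with hEdef
  set P : Q := p_ f - ph_ f with hPdef
  set g0 : L := i E with hg0def
  have hGal : ∀ wh ∈ Hh, ∀ rh ∈ Qh,
      a E wh + b wh P + b E rh - c P rh = 0 := by
    intro wh hwh rh hrh
    have h1 := (hcont f).1 wh
    have h2 := hdisc1 wh hwh
    have h3 := (hcont f).2 rh
    have h4 := hdisc2 rh hrh
    rw [hEdef, hPdef]
    simp only [map_sub, ContinuousLinearMap.sub_apply]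
    linarith
  have key : ∀ ε : ℝ, 0 < ε →
      ‖g0‖ ^ 2 ≤ CA * (1 + K) * ((ρ * ‖f‖ + ε) * (ρ * ‖g0‖ + ε)) := by
    intro ε hε
    obtain ⟨vf, hvf, qf, hqf, hηf⟩ := happ f ε hε
    obtain ⟨vg, hvg, qg, hqg, hηg⟩ := happ g0 ε hε
    set e : H := uh_ f - vf with hedef
    set p' : Q := ph_ f - qf with hp'def
    have he_mem : e ∈ Hh := Submodule.sub_mem _ huh_mem hvf
    have hp'_mem : p' ∈ Qh := Submodule.sub_mem _ hph_mem hqf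
    set ηu : H := u_ f - vf with hηudef
    set ηp : Q := p_ f - qf with hηpdef
    have hEdec : E = ηu - e := by rw [hEdef, hedef, hηudef]; abel
    have hPdec : P = ηp - p' := by rw [hPdef, hp'def, hηpdef]; abel
    -- inf-sup element
    obtain ⟨z, hz_mem, hz_norm, hz_b⟩ : ∃ z ∈ Hh, ‖z‖ = ‖p'‖ ∧ β' * ‖p'‖ ^ 2 ≤ b z p' := by
      by_cases hp0 : p' = 0
      · exact ⟨0, Submodule.zero_mem _, by simp [hp0], by simp [hp0]⟩
      · obtain ⟨vh, hvh_mem, hvh_ne, hvh_b⟩ := hb_infsup_h p' hp'_mem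
        have hv0 : 0 < ‖vh‖ := norm_pos_iff.mpr hvh_ne
        refine ⟨(‖p'‖ / ‖vh‖) • vh, Submodule.smul_mem _ _ hvh_mem, ?_, ?_⟩
        · rw [norm_smul, Real.norm_eq_abs, abs_div, abs_of_nonneg (norm_nonneg p'),
            abs_of_nonneg (norm_nonneg vh)]
          field_simp
        · have hb' : b ((‖p'‖ / ‖vh‖) • vh) p' = (‖p'‖ / ‖vh‖) * b vh p' := by
            simp [map_smul]
          rw [hb']
          calc β' * ‖p'‖ ^ 2 = (‖p'‖ / ‖vh‖) * (β' * ‖vh‖ * ‖p'‖) := by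
                field_simp
            _ ≤ (‖p'‖ / ‖vh‖) * b vh p' :=
                mul_le_mul_of_nonneg_left hvh_b (by positivity)
    set w : H := e + δ • z with hwdef
    have hw_mem : w ∈ Hh := Submodule.add_mem _ he_mem (Submodule.smul_mem _ _ hz_mem)
    -- quantitative facts
    have hCSez : (a e z) ^ 2 ≤ a e e * a z z := bilin_cs_sq' a ha_symm haa e z
    have hazz0 : 0 ≤ a z z := haa z
    have hazz : a z z ≤ Ca * ‖p'‖ ^ 2 := by
      have h := a.le_opNorm₂ z z
      rw [Real.norm_eq_abs] at h
      have h2 : a z z ≤ ‖a‖ * ‖z‖ * ‖z‖ := (le_abs_self _).trans h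
      rw [hz_norm] at h2
      rw [hCadef]
      have hsq : ‖p'‖ * ‖p'‖ = ‖p'‖ ^ 2 := by ring
      nlinarith [sq_nonneg ‖p'‖, h2]
    have hδ2Ca : δ ^ 2 * Ca = 2 * qq := by
      rw [hδdef, hqqdef, div_pow]
      field_simp [hCa0.ne']
    have hδβ' : δ * β' = 2 * qq := by
      rw [hδdef, hqqdef]
      field_simp [hCa0.ne']
    have s1 : δ ^ 2 * (a e z) ^ 2 ≤ δ ^ 2 * (a e e * a z z) :=
      mul_le_mul_of_nonneg_left hCSez (sq_nonneg δ)
    have s2 : δ ^ 2 * (a e e * a z z) ≤ δ ^ 2 * (a e e * (Ca * ‖p'‖ ^ 2)) :=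
      mul_le_mul_of_nonneg_left (mul_le_mul_of_nonneg_left hazz (haa e)) (sq_nonneg δ)
    have s3 : δ ^ 2 * (a e e * (Ca * ‖p'‖ ^ 2)) = 2 * qq * (a e e * ‖p'‖ ^ 2) := by
      rw [show δ ^ 2 * (a e e * (Ca * ‖p'‖ ^ 2))
          = δ ^ 2 * Ca * (a e e * ‖p'‖ ^ 2) by ring, hδ2Ca]
    have hq : (δ * a e z) ^ 2 ≤ 2 * qq * (a e e * ‖p'‖ ^ 2) := by
      have hx : (δ * a e z) ^ 2 = δ ^ 2 * (a e z) ^ 2 := by ring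
      linarith [s1, s2, s3.symm.le, s3.le]
    have h1 : -(a e e / 2 + qq * ‖p'‖ ^ 2) ≤ δ * a e z := by
      have hq' : (δ * a e z) ^ 2 ≤ a e e * (2 * qq * ‖p'‖ ^ 2) := by linarith [hq, (by ring :
        2 * qq * (a e e * ‖p'‖ ^ 2) = a e e * (2 * qq * ‖p'‖ ^ 2))]
      have := neg_half_le hq' (haa e)
        (by positivity)
      linarith
    have hδb : δ * (β' * ‖p'‖ ^ 2) ≤ δ * b z p' := mul_le_mul_of_nonneg_left hz_b hδ0.le
    have hδβs : δ * (β' * ‖p'‖ ^ 2) = 2 * qq * ‖p'‖ ^ 2 := by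
      rw [show δ * (β' * ‖p'‖ ^ 2) = (δ * β') * ‖p'‖ ^ 2 by ring, hδβ']
    have hγ1 : γ ≤ 1 / 2 := min_le_left _ _
    have hγ2 : γ ≤ qq := min_le_right _ _
    have hstab : γ * (a e e + ‖p'‖ ^ 2 + c p' p') ≤
        a e e + c p' p' + δ * (a e z + b z p') := by
      have t1 : γ * a e e ≤ (1 / 2) * a e e := mul_le_mul_of_nonneg_right hγ1 (haa e)
      have t2 : γ * ‖p'‖ ^ 2 ≤ qq * ‖p'‖ ^ 2 := mul_le_mul_of_nonneg_right hγ2 (sq_nonneg _)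
      have t3 : γ * c p' p' ≤ c p' p' := by
        have := mul_le_mul_of_nonneg_right hγ1 (hc_pos p')
        linarith [hc_pos p']
      have hm : δ * (a e z + b z p') = δ * a e z + δ * b z p' := by ring
      linarith [h1, hδb, hδβs.le, hδβs.symm.le, t1, t2, t3, hm.le, hm.symm.le]
    have hA_e : a e w + b w p' + b e (-p') - c p' (-p') =
        a e e + c p' p' + δ * (a e z + b z p') := by
      rw [hwdef]
      simp only [map_add, map_smul, map_neg, ContinuousLinearMap.add_apply,
        ContinuousLinearMap.smul_apply, ContinuousLinearMap.neg_apply, smul_eq_mul]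
      ring
    have hGalw := hGal w hw_mem (-p') (Submodule.neg_mem _ hp'_mem)
    have hlin1 : a E w + b w P + b E (-p') - c P (-p') =
        (a ηu w + b w ηp + b ηu (-p') - c ηp (-p'))
          - (a e w + b w p' + b e (-p') - c p' (-p')) := by
      rw [hEdec, hPdec]
      simp only [map_sub, ContinuousLinearMap.sub_apply]
      ring
    have hexp_w : a w w = a e e + 2 * δ * a e z + δ ^ 2 * a z z := by
      rw [hwdef]
      simp only [map_add, map_smul, ContinuousLinearMap.add_apply,
        ContinuousLinearMap.smul_apply, smul_eq_mul]
      rw [ha_symm z e]; ring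
    have hcross : 2 * δ * a e z ≤ a e e + δ ^ 2 * a z z := by
      have hs : (δ * a e z) ^ 2 ≤ a e e * (δ ^ 2 * a z z) := by
        have : δ ^ 2 * (a e e * a z z) = a e e * (δ ^ 2 * a z z) := by ring
        linarith [s1, this.le, this.symm.le]
      have := half_le_of_sq_le hs (haa e) (mul_nonneg (sq_nonneg δ) hazz0)
      linarith
    have hNsqw : a w w + ‖p'‖ ^ 2 + c p' p' ≤ C2sq * (a e e + ‖p'‖ ^ 2 + c p' p') := by
      have h2' : δ ^ 2 * a z z ≤ δ ^ 2 * (Ca * ‖p'‖ ^ 2) :=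
        mul_le_mul_of_nonneg_left hazz (sq_nonneg δ)
      have haww : a w w ≤ 2 * a e e + 2 * (δ ^ 2 * (Ca * ‖p'‖ ^ 2)) := by
        linarith [hexp_w.le, hexp_w.symm.le, hcross, h2']
      rw [hC2sqdef]
      have n1 : 0 ≤ δ ^ 2 * Ca * a e e :=
        mul_nonneg (mul_nonneg (sq_nonneg δ) hCa0.le) (haa e)
      have n2 : 0 ≤ δ ^ 2 * Ca * c p' p' :=
        mul_nonneg (mul_nonneg (sq_nonneg δ) hCa0.le) (hc_pos p')
      linarith [haww, n1, n2, hc_pos p', sq_nonneg ‖p'‖]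
    have hNNw : NN a c w (-p') ≤ C2 * NN a c e p' := by
      rw [NN_neg_right, NN_def, NN_def, hC2def]
      calc Real.sqrt (a w w + ‖p'‖ ^ 2 + c p' p')
          ≤ Real.sqrt (C2sq * (a e e + ‖p'‖ ^ 2 + c p' p')) := Real.sqrt_le_sqrt hNsqw
        _ = Real.sqrt C2sq * Real.sqrt (a e e + ‖p'‖ ^ 2 + c p' p') :=
            Real.sqrt_mul hC2sq0.le _
    have hNNe_sq : NN a c e p' ^ 2 = a e e + ‖p'‖ ^ 2 + c p' p' := NN_sq haa hc_pos e p'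
    have hbound1 : a ηu w + b w ηp + b ηu (-p') - c ηp (-p') ≤
        CA * (NN a c ηu ηp * NN a c w (-p')) := by
      rw [hCAeq]
      exact (le_abs_self _).trans (Abil_le a b c ha_symm hα ha_coer hc_symm hc_pos ηu ηp w (-p'))
    have hcea : NN a c e p' ≤ K * NN a c ηu ηp := by
      have hchain : γ * NN a c e p' ^ 2 ≤ CA * C2 * (NN a c ηu ηp * NN a c e p') := by
        rw [hNNe_sq]
        calc γ * (a e e + ‖p'‖ ^ 2 + c p' p')
            ≤ a e e + c p' p' + δ * (a e z + b z p') := hstab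
          _ = a e w + b w p' + b e (-p') - c p' (-p') := hA_e.symm
          _ = a ηu w + b w ηp + b ηu (-p') - c ηp (-p') := by linarith [hGalw, hlin1]
          _ ≤ CA * (NN a c ηu ηp * NN a c w (-p')) := hbound1
          _ ≤ CA * (NN a c ηu ηp * (C2 * NN a c e p')) :=
              mul_le_mul_of_nonneg_left
                (mul_le_mul_of_nonneg_left hNNw (NN_nonneg a c ηu ηp)) hCA0.le
          _ = CA * C2 * (NN a c ηu ηp * NN a c e p') := by ring
      rcases eq_or_lt_of_le (NN_nonneg a c e p') with h0 | hpos
      · rw [← h0]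
        exact mul_nonneg hK0.le (NN_nonneg a c ηu ηp)
      · have hKγ : K * γ = CA * C2 := by
          rw [hKdef]; field_simp
        have hgx : 0 < γ * NN a c e p' := mul_pos hγ0 hpos
        apply le_of_mul_le_mul_right _ hgx
        calc NN a c e p' * (γ * NN a c e p') = γ * NN a c e p' ^ 2 := by ring
          _ ≤ CA * C2 * (NN a c ηu ηp * NN a c e p') := hchain
          _ = K * γ * (NN a c ηu ηp * NN a c e p') := by rw [hKγ]
          _ = K * NN a c ηu ηp * (γ * NN a c e p') := by ring
    -- duality
    have hg0sq : ‖g0‖ ^ 2 = ⟪g0, g0⟫ := (real_inner_self_eq_norm_sq g0).symm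
    have h1d := (hcont g0).1 E
    rw [← hg0def] at h1d
    have h2d := (hcont g0).2 P
    have hdual : ⟪g0, g0⟫ =
        a E (u_ g0) + b (u_ g0) P + b E (p_ g0) - c P (p_ g0) := by
      have hsymE := ha_symm E (u_ g0)
      have hsymP := hc_symm P (p_ g0)
      linarith [h1d, h2d]
    have hGalg := hGal vg hvg qg hqg
    have hlin2 : a E (u_ g0) + b (u_ g0) P + b E (p_ g0) - c P (p_ g0)
        = (a E (u_ g0 - vg) + b (u_ g0 - vg) P + b E (p_ g0 - qg) - c P (p_ g0 - qg))
          + (a E vg + b vg P + b E qg - c P qg) := by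
      simp only [map_sub, ContinuousLinearMap.sub_apply]
      ring
    have hlin3 : a E (u_ g0 - vg) + b (u_ g0 - vg) P + b E (p_ g0 - qg) - c P (p_ g0 - qg)
        = (a ηu (u_ g0 - vg) + b (u_ g0 - vg) ηp + b ηu (p_ g0 - qg) - c ηp (p_ g0 - qg))
          - (a e (u_ g0 - vg) + b (u_ g0 - vg) p' + b e (p_ g0 - qg) - c p' (p_ g0 - qg)) := by
      rw [hEdec, hPdec]
      simp only [map_sub, ContinuousLinearMap.sub_apply]
      ring
    have hB1 : a ηu (u_ g0 - vg) + b (u_ g0 - vg) ηp + b ηu (p_ g0 - qg) - c ηp (p_ g0 - qg)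
        ≤ CA * (NN a c ηu ηp * NN a c (u_ g0 - vg) (p_ g0 - qg)) := by
      rw [hCAeq]
      exact (le_abs_self _).trans
        (Abil_le a b c ha_symm hα ha_coer hc_symm hc_pos ηu ηp (u_ g0 - vg) (p_ g0 - qg))
    have hB2 : -(a e (u_ g0 - vg) + b (u_ g0 - vg) p' + b e (p_ g0 - qg) - c p' (p_ g0 - qg))
        ≤ CA * (NN a c e p' * NN a c (u_ g0 - vg) (p_ g0 - qg)) := by
      rw [hCAeq]
      exact (neg_le_abs _).trans
        (Abil_le a b c ha_symm hα ha_coer hc_symm hc_pos e p' (u_ g0 - vg) (p_ g0 - qg))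
    have hNg0 : 0 ≤ NN a c (u_ g0 - vg) (p_ g0 - qg) := NN_nonneg _ _ _ _
    have hNη0 : 0 ≤ NN a c ηu ηp := NN_nonneg _ _ _ _
    have hstep2 : CA * (NN a c e p' * NN a c (u_ g0 - vg) (p_ g0 - qg)) ≤
        CA * ((K * NN a c ηu ηp) * NN a c (u_ g0 - vg) (p_ g0 - qg)) :=
      mul_le_mul_of_nonneg_left (mul_le_mul_of_nonneg_right hcea hNg0) hCA0.le
    have hfinal : ‖g0‖ ^ 2 ≤
        CA * (1 + K) * (NN a c ηu ηp * NN a c (u_ g0 - vg) (p_ g0 - qg)) := by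
      have hring : CA * (1 + K) * (NN a c ηu ηp * NN a c (u_ g0 - vg) (p_ g0 - qg))
          = CA * (NN a c ηu ηp * NN a c (u_ g0 - vg) (p_ g0 - qg))
            + CA * ((K * NN a c ηu ηp) * NN a c (u_ g0 - vg) (p_ g0 - qg)) := by ring
      linarith [hg0sq, hdual, hlin2, hlin3, hGalg, hB1, hB2, hstep2, hring.le, hring.symm.le]
    have hρf0 : 0 ≤ ρ * ‖f‖ + ε := by
      have := mul_nonneg hρ (norm_nonneg f); linarith
    calc ‖g0‖ ^ 2 ≤ CA * (1 + K) * (NN a c ηu ηp * NN a c (u_ g0 - vg) (p_ g0 - qg)) := hfinal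
      _ ≤ CA * (1 + K) * ((ρ * ‖f‖ + ε) * (ρ * ‖g0‖ + ε)) := by
          apply mul_le_mul_of_nonneg_left _ (mul_pos hCA0 (by linarith : (0:ℝ) < 1 + K)).le
          exact mul_le_mul hηf.le hηg.le hNg0 hρf0
  -- pass to the limit ε → 0⁺
  have hlim : ‖g0‖ ^ 2 ≤ CA * (1 + K) * ((ρ * ‖f‖) * (ρ * ‖g0‖)) := by
    have hT : Filter.Tendsto (fun ε : ℝ => CA * (1 + K) * ((ρ * ‖f‖ + ε) * (ρ * ‖g0‖ + ε)))
        (nhdsWithin 0 (Set.Ioi 0)) (nhds (CA * (1 + K) * ((ρ * ‖f‖ + 0) * (ρ * ‖g0‖ + 0)))) := by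
      apply Filter.Tendsto.mono_left _ nhdsWithin_le_nhds
      exact Continuous.tendsto (by continuity) 0
    simp only [add_zero] at hT
    refine ge_of_tendsto hT ?_
    filter_upwards [self_mem_nhdsWithin] with ε hε
    exact key ε hε
  have higoal : i (u_ f) - i (uh_ f) = g0 := by rw [hg0def, hEdef, map_sub]
  rw [higoal]
  rcases (norm_nonneg g0).eq_or_lt with h0 | hpos
  · rw [← h0]
    exact mul_nonneg (mul_nonneg (mul_pos hCA0 (by linarith : (0:ℝ) < 1 + K)).le
      (sq_nonneg ρ)) (norm_nonneg f)
  · have h2 : ‖g0‖ * ‖g0‖ ≤ (CA * (1 + K) * ρ ^ 2 * ‖f‖) * ‖g0‖ := by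
      calc ‖g0‖ * ‖g0‖ = ‖g0‖ ^ 2 := by ring
        _ ≤ CA * (1 + K) * ((ρ * ‖f‖) * (ρ * ‖g0‖)) := hlim
        _ = (CA * (1 + K) * ρ ^ 2 * ‖f‖) * ‖g0‖ := by ring
    exact le_of_mul_le_mul_right h2 hpos
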